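/- Let N, M, K be positive natural numbers and let B ∈ ℂ^{N×M} be a binary selection matrix. Then for X ∈ ℂ^{N×K} and W ∈ ℂ^{M×K}, the equality X = B·W holds if and only if there exist matrices U ∈ ℂ^{N×N} and V ∈ ℂ^{K×K} such that the block matrix [[U, X, B], [Xᴴ, V, Wᴴ], [Bᴴ, W, I_M]] is positive semidefinite and Re(Tr(U)) − M ≤ 0. -/

import Mathlib

open Matrix
open scoped ComplexOrder

/-- Lemma 1 of the paper: for a binary selection matrix `B` (every entry in `{0,1}`,
each column with exactly one entry equal to `1`), the bilinear equality `X = B·W` is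
equivalent to the LMI `[[U, X, B], [Xᴴ, V, Wᴴ], [Bᴴ, W, I_M]] ⪰ 0` together with
`Re (Tr U) − M ≤ 0` for some `U`, `V`. -/
theorem stmt_4 (N M K : ℕ) (hN : 0 < N) (hM : 0 < M) (hK : 0 < K)
    (B : Matrix (Fin N) (Fin M) ℂ)
    (hbin : ∀ n m, B n m = 0 ∨ B n m = 1)
    (hcol : ∀ m, ∃! n, B n m = 1)
    (X : Matrix (Fin N) (Fin K) ℂ) (W : Matrix (Fin M) (Fin K) ℂ) :
    X = B * W ↔
      ∃ (U : Matrix (Fin N) (Fin N) ℂ) (V : Matrix (Fin K) (Fin K) ℂ),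
        (Matrix.fromBlocks
            (Matrix.fromBlocks U X Xᴴ V)
            (Matrix.fromRows B Wᴴ)
            (Matrix.fromCols Bᴴ W)
            (1 : Matrix (Fin M) (Fin M) ℂ)).PosSemidef ∧
        (Matrix.trace U).re - (M : ℝ) ≤ 0 := by
  classical
  have hBsq : ∀ n m, B n m * star (B n m) = B n m := by
    intro n m; rcases hbin n m with h | h <;> simp [h]
  have hcolsum : ∀ m, ∑ n, B n m = 1 := by
    intro m
    obtain ⟨n0, hn0, huniq⟩ := hcol m
    rw [Finset.sum_eq_single n0
      (fun b _ hb => (hbin b m).resolve_right (fun h => hb (huniq b h)))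
      (fun h => absurd (Finset.mem_univ n0) h)]
    exact hn0
  have hBB : (B * Bᴴ).trace = (M : ℂ) := by
    calc (B * Bᴴ).trace = ∑ n, ∑ m, B n m * star (B n m) := by
          simp [Matrix.trace, Matrix.diag, Matrix.mul_apply, Matrix.conjTranspose_apply]
      _ = ∑ n, ∑ m, B n m := by simp_rw [hBsq]
      _ = ∑ m, ∑ n, B n m := Finset.sum_comm
      _ = (M : ℂ) := by simp [hcolsum]
  have hct : (Matrix.fromRows B Wᴴ)ᴴ = Matrix.fromCols Bᴴ W := by
    rw [Matrix.conjTranspose_fromRows_eq_fromCols_conjTranspose,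
      Matrix.conjTranspose_conjTranspose]
  have hone : (1 : Matrix (Fin M) (Fin M) ℂ).PosDef := Matrix.PosDef.one
  haveI : Invertible (1 : Matrix (Fin M) (Fin M) ℂ) := invertibleOne
  constructor
  · rintro rfl
    refine ⟨B * Bᴴ, Wᴴ * W, ?_, ?_⟩
    · rw [← hct, Matrix.PosDef.fromBlocks₂₂ _ _ hone]
      have h0 : Matrix.fromBlocks (B * Bᴴ) (B * W) (B * W)ᴴ (Wᴴ * W) -
          Matrix.fromRows B Wᴴ * (1 : Matrix (Fin M) (Fin M) ℂ)⁻¹ *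
            (Matrix.fromRows B Wᴴ)ᴴ = 0 := by
        rw [inv_one, Matrix.mul_one, hct, Matrix.fromRows_mul_fromCols,
          Matrix.conjTranspose_mul, sub_eq_zero]
      rw [h0]
      exact Matrix.PosSemidef.zero
    · rw [hBB]; simp
  · rintro ⟨U, V, hPSD, htr⟩
    rw [← hct, Matrix.PosDef.fromBlocks₂₂ _ _ hone, inv_one, Matrix.mul_one, hct,
      Matrix.fromRows_mul_fromCols] at hPSD
    have hex := by
      open scoped MatrixOrder in
      exact CStarAlgebra.nonneg_iff_eq_star_mul_self.mp hPSD.nonneg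
    obtain ⟨C, hC⟩ := hex
    simp only [Matrix.star_eq_conjTranspose] at hC
    -- sum of the (1,1)-block diagonal of `Cᴴ * C`
    have hdiag : ∀ n : Fin N,
        U n n - (B * Bᴴ) n n = (Cᴴ * C) (Sum.inl n) (Sum.inl n) := by
      intro n
      have h := congrFun (congrFun hC (Sum.inl n)) (Sum.inl n)
      simpa using h
    have hre : ∀ n : Fin N, ((Cᴴ * C) (Sum.inl n) (Sum.inl n)).re =
        ∑ j, Complex.normSq (C j (Sum.inl n)) := by
      intro n
      simp [Matrix.mul_apply, Matrix.conjTranspose_apply, Complex.re_sum,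
        ← Complex.normSq_eq_conj_mul_self, RCLike.star_def]
    have hsum : ∑ n, ∑ j, Complex.normSq (C j (Sum.inl n)) =
        (Matrix.trace U).re - (M : ℝ) := by
      have : ∑ n, ((Cᴴ * C) (Sum.inl n) (Sum.inl n)).re =
          ∑ n, (U n n - (B * Bᴴ) n n).re := by
        refine Finset.sum_congr rfl fun n _ => ?_
        rw [hdiag n]
      rw [← Finset.sum_congr rfl (fun n _ => hre n), this]
      have hM : (∑ n, (B * Bᴴ) n n).re = (M : ℝ) := by
        have : ∑ n, (B * Bᴴ) n n = (M : ℂ) := hBB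
        rw [this]; simp
      simp only [Complex.sub_re, Finset.sum_sub_distrib, ← Complex.re_sum, hM]
      simp [Matrix.trace, Matrix.diag]
    have hCzero : ∀ j n, C j (Sum.inl n) = 0 := by
      have hle : ∑ n, ∑ j, Complex.normSq (C j (Sum.inl n)) ≤ 0 := by
        rw [hsum]; exact htr
      have hge : (0:ℝ) ≤ ∑ n, ∑ j, Complex.normSq (C j (Sum.inl n)) :=
        Finset.sum_nonneg fun n _ => Finset.sum_nonneg fun j _ => Complex.normSq_nonneg _
      have heq := le_antisymm hle hge
      intro j n
      have h1 := (Finset.sum_eq_zero_iff_of_nonneg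
        (fun n _ => Finset.sum_nonneg fun j _ => Complex.normSq_nonneg _)).mp heq n
        (Finset.mem_univ n)
      have h2 := (Finset.sum_eq_zero_iff_of_nonneg
        (fun j _ => Complex.normSq_nonneg _)).mp h1 j (Finset.mem_univ j)
      exact Complex.normSq_eq_zero.mp h2
    ext n k
    have h := congrFun (congrFun hC (Sum.inl n)) (Sum.inr k)
    simp [Matrix.mul_apply, Matrix.conjTranspose_apply, hCzero, sub_eq_zero] at h
    exact h
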